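/- arXiv:2312.15978 — 2 statements merged into one kernel-verified Lean document; each statement's English description precedes it below -/
import Mathlib

section
/- Let Φ be a Young function, g : ℝⁿ → ℝ a convex function, and c₀ > 0 a constant with |g(ζ)| ≤ c₀·(1 + Φ(|ζ|)) for all ζ ∈ ℝⁿ. Then for all ζ, θ ∈ ℝⁿ one has |g(ζ) − g(θ)| ≤ 2·n·c₀ · (1 + Φ(2(1 + |ζ| + |θ|))) / (1 + |ζ| + |θ|) · |ζ − θ|. -/
open Set Filter Topology MeasureTheory

/-- A Young function: continuous, convex on `[0,∞)`, vanishing only at `0`,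
with `Φ(x)/x → 0` at `0⁺` and `Φ(x)/x → ∞` at `∞`. -/
def IsYoung (Φ : ℝ → ℝ) : Prop :=
  ContinuousOn Φ (Set.Ici 0) ∧ ConvexOn ℝ (Set.Ici 0) Φ ∧ Φ 0 = 0 ∧
  (∀ x > (0:ℝ), 0 < Φ x) ∧
  Tendsto (fun x => Φ x / x) (nhdsWithin 0 (Set.Ioi 0)) (nhds 0) ∧
  Tendsto (fun x => Φ x / x) atTop atTop

/-- The Fenchel conjugate `Φ̃(y) = sup_{x ≥ 0} (x·y − Φ(x))`. -/
noncomputable def fenchel (Φ : ℝ → ℝ) (y : ℝ) : ℝ :=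
  sSup {z | ∃ x ≥ (0:ℝ), z = x * y - Φ x}

/-- Continuity estimate for a convex function with Orlicz growth:
`|g(ζ) − g(θ)| ≤ 2·n·c₀·(1 + Φ(2(1+‖ζ‖+‖θ‖)))/(1+‖ζ‖+‖θ‖)·‖ζ−θ‖`. -/
theorem stmt6 (n : ℕ) (Φ : ℝ → ℝ) (hY : IsYoung Φ)
    (g : EuclideanSpace ℝ (Fin n) → ℝ) (hg : ConvexOn ℝ Set.univ g)
    (c₀ : ℝ) (hc₀ : 0 < c₀) (hgrowth : ∀ ζ, |g ζ| ≤ c₀ * (1 + Φ ‖ζ‖)) :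
    ∀ ζ θ : EuclideanSpace ℝ (Fin n),
      |g ζ - g θ| ≤ 2 * n * c₀ *
        ((1 + Φ (2 * (1 + ‖ζ‖ + ‖θ‖))) / (1 + ‖ζ‖ + ‖θ‖)) * ‖ζ - θ‖ := by
  obtain ⟨hcont, hconv, h0, hpos, -, -⟩ := hY
  have hΦ0 : ∀ x, 0 ≤ x → 0 ≤ Φ x := by
    intro x hx
    rcases eq_or_lt_of_le hx with h | h
    · simp [← h, h0]
    · exact (hpos x h).le
  have hmono : ∀ x y : ℝ, 0 ≤ x → x ≤ y → Φ x ≤ Φ y := by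
    intro x y hx hxy
    rcases eq_or_lt_of_le (hx.trans hxy) with h | hy
    · have hx0 : x = 0 := le_antisymm (hxy.trans h.symm.le) hx
      have hy0 : y = 0 := h.symm
      rw [hx0, hy0]
    · have hb : (0:ℝ) ≤ x / y := div_nonneg hx hy.le
      have hxy' : x / y ≤ 1 := (div_le_one hy).mpr hxy
      have key := hconv.2 (Set.mem_Ici.mpr (le_refl (0:ℝ)))
        (Set.mem_Ici.mpr (hx.trans hxy))
        (show (0:ℝ) ≤ 1 - x/y by linarith) hb (by ring)
      have e1 : (1 - x/y) • (0:ℝ) + (x/y) • y = x := by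
        rw [smul_eq_mul, smul_eq_mul, mul_zero, zero_add, div_mul_cancel₀ x hy.ne']
      rw [e1, smul_eq_mul, smul_eq_mul, h0, mul_zero, zero_add] at key
      calc Φ x ≤ (x/y) * Φ y := key
        _ ≤ 1 * Φ y := mul_le_mul_of_nonneg_right hxy' (hΦ0 y (hx.trans hxy))
        _ = Φ y := one_mul _
  -- key one-sided estimate
  have key : ∀ a b : EuclideanSpace ℝ (Fin n),
      g b - g a ≤ 2 * c₀ * ((1 + Φ (2 * (1 + ‖a‖ + ‖b‖))) / (1 + ‖a‖ + ‖b‖)) * ‖a - b‖ := by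
    intro a b
    set R : ℝ := 1 + ‖a‖ + ‖b‖ with hR
    have hRpos : 0 < R := by positivity
    set d : ℝ := ‖a - b‖ with hd
    have hdnn : 0 ≤ d := norm_nonneg _
    have hΦ2R : 0 ≤ Φ (2 * R) := hΦ0 _ (by positivity)
    set M : ℝ := c₀ * (1 + Φ (2 * R)) with hM
    have hMpos : 0 < M := by
      have : (0:ℝ) < 1 + Φ (2*R) := by linarith
      positivity
    rcases eq_or_lt_of_le hdnn with h0d | hdpos
    · have hab : a = b := by
        have h1 : ‖a - b‖ = 0 := h0d.symm
        have := norm_sub_eq_zero_iff.mp h1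
        exact this
      have e : g b - g a = 0 := by rw [hab, sub_self]
      rw [e, ← h0d, mul_zero]
    · set u := b + (R/d) • (b - a) with hu
      set t : ℝ := d / (d + R) with ht
      have hdR : 0 < d + R := by linarith
      have ht0 : 0 ≤ t := by positivity
      have ht1 : t ≤ 1 := by
        rw [ht, div_le_one hdR]; linarith
      have hcomb : (1 - t) • a + t • u = b := by
        rw [hu, ht]
        match_scalars <;> field_simp <;> ring
      have hconvg := hg.2 (Set.mem_univ a) (Set.mem_univ u)
        (show (0:ℝ) ≤ 1 - t by linarith) ht0 (by ring)
      rw [hcomb] at hconvg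
      rw [smul_eq_mul, smul_eq_mul] at hconvg
      have hba : ‖b - a‖ = d := by rw [hd, norm_sub_rev]
      have hnu : ‖u‖ ≤ 2 * R := by
        have h1 : ‖u‖ ≤ ‖b‖ + ‖(R/d) • (b - a)‖ := norm_add_le _ _
        have h2 : ‖(R/d) • (b - a)‖ = (R/d) * d := by
          rw [norm_smul, Real.norm_eq_abs, abs_of_pos (by positivity), hba]
        have h3 : (R/d) * d = R := by field_simp
        have h4 : ‖b‖ ≤ R := by
          have := norm_nonneg a; rw [hR]; linarith
        linarith
      have hgu : |g u| ≤ M := by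
        refine (hgrowth u).trans ?_
        have := hmono ‖u‖ (2*R) (norm_nonneg _) hnu
        rw [hM]; nlinarith
      have hga : |g a| ≤ M := by
        refine (hgrowth a).trans ?_
        have h1 : ‖a‖ ≤ 2*R := by
          have := norm_nonneg b; rw [hR]; linarith
        have := hmono ‖a‖ (2*R) (norm_nonneg _) h1
        rw [hM]; nlinarith
      have step1 : g b - g a ≤ t * (g u - g a) := by nlinarith
      have step2 : t * (g u - g a) ≤ t * (2*M) := by
        apply mul_le_mul_of_nonneg_left _ ht0
        have h1 := abs_le.mp hgu
        have h2 := abs_le.mp hga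
        linarith [h1.1, h1.2, h2.1, h2.2]
      have step3 : t ≤ d / R := by
        rw [ht, div_le_div_iff₀ hdR hRpos]
        nlinarith
      have step4 : t * (2*M) ≤ (d/R) * (2*M) := by
        apply mul_le_mul_of_nonneg_right step3 (by linarith)
      have final : (d/R) * (2*M) = 2 * c₀ * ((1 + Φ (2*R)) / R) * d := by
        rw [hM]; field_simp
      linarith
  intro ζ θ
  rcases Nat.eq_zero_or_pos n with hn | hn
  · subst hn
    have hzt : ζ = θ := Subsingleton.elim ζ θ
    simp [hzt]
  · have h1 := key ζ θ
    have h2 := key θ ζ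
    have hsym : (1 : ℝ) + ‖θ‖ + ‖ζ‖ = 1 + ‖ζ‖ + ‖θ‖ := by ring
    rw [hsym, norm_sub_rev θ ζ] at h2
    have habs : |g ζ - g θ| ≤
        2 * c₀ * ((1 + Φ (2 * (1 + ‖ζ‖ + ‖θ‖))) / (1 + ‖ζ‖ + ‖θ‖)) * ‖ζ - θ‖ :=
      abs_sub_le_iff.mpr ⟨h2, h1⟩
    have hX : 0 ≤ (1 + Φ (2 * (1 + ‖ζ‖ + ‖θ‖))) / (1 + ‖ζ‖ + ‖θ‖) := by
      have h1' : 0 ≤ Φ (2 * (1 + ‖ζ‖ + ‖θ‖)) := hΦ0 _ (by positivity)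
      apply div_nonneg (by linarith) (by positivity)
    have hn1 : (1:ℝ) ≤ (n:ℝ) := by exact_mod_cast hn
    set X : ℝ := (1 + Φ (2 * (1 + ‖ζ‖ + ‖θ‖))) / (1 + ‖ζ‖ + ‖θ‖) with hXdef
    set D : ℝ := ‖ζ - θ‖ with hDdef
    have hprod : 0 ≤ c₀ * X * D :=
      mul_nonneg (mul_nonneg hc₀.le hX) (norm_nonneg _)
    have hq : 0 ≤ ((n:ℝ) - 1) * (c₀ * X * D) :=
      mul_nonneg (sub_nonneg.mpr hn1) hprod
    have e : 2 * (n:ℝ) * c₀ * X * D - 2 * c₀ * X * D = 2 * (((n:ℝ) - 1) * (c₀ * X * D)) := by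
      ring
    linarith
end

section
/- Let Φ be a Young function with nondecreasing right derivative φ, and let g : ℝⁿ → ℝ be convex with |g(ζ)| ≤ c₀·(1 + Φ(|ζ|)) for all ζ. If Φ satisfies the Δ₂-condition for large arguments (there are k, δ > 0 with Φ(2t) ≤ k·Φ(t) for t ≥ δ), then there is a constant c₀'' > 0 (depending on c₀, n, k, Φ(δ)) such that |g(ζ) − g(θ)| ≤ c₀''·(1 + φ(1 + |ζ| + |θ|))·|ζ − θ| for all ζ, θ ∈ ℝⁿ. -/
open Set Filter Topology MeasureTheory

lemma young_nonneg {Φ : ℝ → ℝ} (hY : IsYoung Φ) : ∀ x ≥ (0:ℝ), 0 ≤ Φ x := by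
  intro x hx
  rcases eq_or_lt_of_le hx with h | h
  · rw [← h]; exact le_of_eq hY.2.2.1.symm
  · exact (hY.2.2.2.1 x h).le

lemma young_mono {Φ : ℝ → ℝ} (hY : IsYoung Φ) : MonotoneOn Φ (Set.Ici 0) := by
  intro x hx y hy hxy
  have h0 : (0:ℝ) ∈ Set.Ici (0:ℝ) := Set.self_mem_Ici
  have hseg : x ∈ segment ℝ (0:ℝ) y := by
    rw [segment_eq_Icc hy]; exact ⟨hx, hxy⟩
  have h := hY.2.1.le_on_segment h0 hy hseg
  rw [hY.2.2.1] at h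
  calc Φ x ≤ max 0 (Φ y) := h
    _ = Φ y := max_eq_right (young_nonneg hY y hy)

/-- `Φ t ≤ t * φ t` for `t > 0`, where `φ t` is the right derivative. -/
lemma young_le_mul_rderiv {Φ φ : ℝ → ℝ} (hY : IsYoung Φ)
    (hφ : ∀ t ≥ (0:ℝ), HasDerivWithinAt Φ (φ t) (Set.Ici t) t)
    {t : ℝ} (ht : 0 < t) : Φ t ≤ t * φ t := by
  have h := (hφ t ht.le)
  rw [hasDerivWithinAt_iff_tendsto_slope, Set.Ici_sdiff_left] at h
  have hdiv : Φ t / t ≤ φ t := by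
    refine ge_of_tendsto h ?_
    filter_upwards [self_mem_nhdsWithin] with y hy
    have hty : t < y := hy
    have hs := hY.2.1.slope_mono_adjacent (Set.self_mem_Ici)
      (Set.mem_Ici.mpr (le_of_lt (lt_trans ht hty))) ht hty
    rw [hY.2.2.1] at hs
    simpa [slope_def_field, sub_zero] using hs
  rw [div_le_iff₀ ht] at hdiv
  linarith [hdiv]

set_option maxHeartbeats 1000000 in
/-- Lipschitz-type estimate: a convex `g` with Orlicz growth for a `Δ₂` (for
large arguments) Young function `Φ` with nondecreasing right derivative `φ`
satisfies `|g(ζ) − g(θ)| ≤ c₀''·(1 + φ(1+‖ζ‖+‖θ‖))·‖ζ−θ‖`. -/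
theorem stmt8 (n : ℕ) (Φ φ : ℝ → ℝ) (hY : IsYoung Φ)
    (hφ : ∀ t ≥ (0:ℝ), HasDerivWithinAt Φ (φ t) (Set.Ici t) t)
    (hmono : MonotoneOn φ (Set.Ici 0))
    (g : EuclideanSpace ℝ (Fin n) → ℝ) (hg : ConvexOn ℝ Set.univ g)
    (c₀ : ℝ) (hc₀ : 0 < c₀) (hgrowth : ∀ ζ, |g ζ| ≤ c₀ * (1 + Φ ‖ζ‖))
    (k δ : ℝ) (hk : 0 < k) (hδ : 0 < δ)
    (hΔ₂ : ∀ t ≥ δ, Φ (2 * t) ≤ k * Φ t) :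
    ∃ c > (0:ℝ), ∀ ζ θ : EuclideanSpace ℝ (Fin n),
      |g ζ - g θ| ≤ c * (1 + φ (1 + ‖ζ‖ + ‖θ‖)) * ‖ζ - θ‖ := by
  have hΦδ : 0 < Φ δ := hY.2.2.2.1 δ hδ
  refine ⟨2 * c₀ * (1 + k * Φ δ + k), by positivity, ?_⟩
  set c : ℝ := 2 * c₀ * (1 + k * Φ δ + k) with hc
  have key : ∀ ζ θ : EuclideanSpace ℝ (Fin n),
      g ζ - g θ ≤ c * (1 + φ (1 + ‖ζ‖ + ‖θ‖)) * ‖ζ - θ‖ := by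
    intro ζ θ
    set r : ℝ := 1 + ‖ζ‖ + ‖θ‖ with hr
    have hζn : (0:ℝ) ≤ ‖ζ‖ := norm_nonneg _
    have hθn : (0:ℝ) ≤ ‖θ‖ := norm_nonneg _
    have hr1 : (1:ℝ) ≤ r := by simp only [hr]; linarith
    have hr0 : (0:ℝ) < r := lt_of_lt_of_le one_pos hr1
    have hΦr : Φ r ≤ r * φ r := young_le_mul_rderiv hY hφ hr0
    have hφr0 : (0:ℝ) ≤ φ r := by
      have h1 : 0 ≤ Φ r := young_nonneg hY r hr0.le
      nlinarith
    -- Δ₂-type bound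
    have hΦ2r : Φ (2 * r) ≤ k * Φ δ + k * (r * φ r) := by
      by_cases hrδ : δ ≤ r
      · have h1 := hΔ₂ r hrδ
        have h2 : k * Φ r ≤ k * (r * φ r) := by
          exact mul_le_mul_of_nonneg_left hΦr hk.le
        nlinarith
      · push_neg at hrδ
        have h1 : Φ (2 * r) ≤ Φ (2 * δ) := by
          apply young_mono hY (Set.mem_Ici.mpr (by positivity : (0:ℝ) ≤ 2*r))
            (Set.mem_Ici.mpr (by positivity : (0:ℝ) ≤ 2*δ))
          linarith
        have h2 := hΔ₂ δ le_rfl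
        have h3 : 0 ≤ k * (r * φ r) := by positivity
        linarith
    by_cases hzt : ζ = θ
    · simp [hzt]
    · set d : ℝ := ‖ζ - θ‖ with hd
      have hd0 : (0:ℝ) < d := by
        rw [hd]; exact norm_pos_iff.mpr (sub_ne_zero.mpr hzt)
      set η : EuclideanSpace ℝ (Fin n) := ζ + (r / d) • (ζ - θ) with hη
      set a : ℝ := r / (d + r) with ha
      set b : ℝ := d / (d + r) with hb
      have hdr0 : (0:ℝ) < d + r := by linarith
      have ha0 : 0 ≤ a := by positivity
      have hb0 : 0 ≤ b := by positivity
      have hne2 : (1:ℝ) + d + ‖ζ‖ + ‖θ‖ ≠ 0 := by positivity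
      have hab : a + b = 1 := by
        rw [ha, hb, ← add_div, add_comm r d, div_self hdr0.ne']
      have hcomb : a • θ + b • η = ζ := by
        rw [hη, ha, hb]
        match_scalars <;> field_simp [hne2] <;> ring
      have hconv := hg.2 (Set.mem_univ θ) (Set.mem_univ η) ha0 hb0 hab
      rw [hcomb] at hconv
      simp only [smul_eq_mul] at hconv
      -- norm bounds
      have hηn : ‖η‖ ≤ 2 * r := by
        have h1 : ‖η‖ ≤ ‖ζ‖ + ‖(r / d) • (ζ - θ)‖ := norm_add_le _ _
        have h2 : ‖(r / d) • (ζ - θ)‖ = (r / d) * d := by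
          rw [norm_smul, Real.norm_eq_abs, abs_of_pos (by positivity)]
        rw [h2] at h1
        have h3 : r / d * d = r := div_mul_cancel₀ r hd0.ne'
        rw [h3] at h1
        simp only [hr] at *
        linarith
      have hgη : |g η| ≤ c₀ * (1 + Φ (2 * r)) := by
        refine le_trans (hgrowth η) ?_
        have := young_mono hY (Set.mem_Ici.mpr (norm_nonneg η))
          (Set.mem_Ici.mpr (by positivity : (0:ℝ) ≤ 2*r)) hηn
        nlinarith
      have hgθ : |g θ| ≤ c₀ * (1 + Φ (2 * r)) := by
        refine le_trans (hgrowth θ) ?_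
        have hθ2r : ‖θ‖ ≤ 2 * r := by simp only [hr]; linarith
        have := young_mono hY (Set.mem_Ici.mpr hθn)
          (Set.mem_Ici.mpr (by positivity : (0:ℝ) ≤ 2*r)) hθ2r
        nlinarith
      -- from convexity: g ζ - g θ ≤ b * (g η - g θ)
      have hstep : g ζ - g θ ≤ b * (g η - g θ) := by
        have : a = 1 - b := by linarith
        rw [this] at hconv; nlinarith
      have hbd : b ≤ d / r := by
        rw [hb, div_le_div_iff₀ hdr0 hr0]
        nlinarith
      have hosc : g η - g θ ≤ 2 * (c₀ * (1 + Φ (2 * r))) := by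
        have h1 := abs_le.mp hgη
        have h2 := abs_le.mp hgθ
        linarith [h1.2, h2.1]
      have hosc0 : (0:ℝ) ≤ 2 * (c₀ * (1 + Φ (2 * r))) := by
        have := young_nonneg hY (2*r) (by positivity)
        positivity
      have hmain : g ζ - g θ ≤ (d / r) * (2 * (c₀ * (1 + Φ (2 * r)))) := by
        calc g ζ - g θ ≤ b * (g η - g θ) := hstep
          _ ≤ b * (2 * (c₀ * (1 + Φ (2 * r)))) := by
              rcases le_or_gt (g η - g θ) 0 with h | h
              · nlinarith
              · exact mul_le_mul_of_nonneg_left hosc hb0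
          _ ≤ (d / r) * (2 * (c₀ * (1 + Φ (2 * r)))) :=
              mul_le_mul_of_nonneg_right hbd hosc0
      refine hmain.trans ?_
      have hkd : 0 ≤ k * Φ δ := by positivity
      have E1 : 1 + Φ (2 * r) ≤ (1 + k * Φ δ + k) * ((1 + φ r) * r) := by
        nlinarith [mul_nonneg hr0.le hφr0, mul_nonneg hkd (mul_nonneg hr0.le hφr0),
          mul_nonneg (sub_nonneg.mpr hr1) hkd, sub_nonneg.mpr hr1]
      calc (d / r) * (2 * (c₀ * (1 + Φ (2 * r))))
          ≤ (d / r) * (2 * (c₀ * ((1 + k * Φ δ + k) * ((1 + φ r) * r)))) := by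
            gcongr
            all_goals positivity
        _ = (2 * c₀ * (1 + k * Φ δ + k)) * (1 + φ r) * d * (r / r) := by ring
        _ = c * (1 + φ r) * d := by rw [div_self hr0.ne', hc]; ring
  intro ζ θ
  refine abs_sub_le_iff.mpr ⟨key ζ θ, ?_⟩
  have h := key θ ζ
  rwa [norm_sub_rev, show (1:ℝ) + ‖θ‖ + ‖ζ‖ = 1 + ‖ζ‖ + ‖θ‖ by ring] at h
end
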